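/- With O, O~, p, c, d, p~_i, e_i, and p_{i,n} as above: for all n ≥ d, one has c^{dg} p^{n+dg} O ⊆ p_{1,n} ⋯ p_{g,n} ⊆ p^{n-d} O. -/

import Mathlib

/-- With `O`, its normalization `Õ = ∏ j, D j`, `p`, `c`, `d`, the primes
`P i` with ramification indices `e i`, and `p_{i,n} = (P i ^ (e i * n)) ∩ O` as in the
paper: for all `n ≥ d`, one has `c^(dg) p^(n+dg) O ⊆ p_{1,n} ⋯ p_{g,n} ⊆ p^(n-d) O`,
where the product in the middle is the ideal product in `O`. -/
theorem stmt8
    (O : Type) [CommRing O] [IsReduced O] [Module.Finite ℤ O] [Module.Flat ℤ O]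
    (h : ℕ) (D : Fin h → Type) [∀ j, CommRing (D j)] [∀ j, IsDomain (D j)]
    [∀ j, IsDedekindDomain (D j)]
    [Algebra O (∀ j, D j)]
    (hinj : Function.Injective (algebraMap O (∀ j, D j)))
    [Algebra.IsIntegral O (∀ j, D j)]
    (p c d : ℕ) (hp : p.Prime) (hc : Nat.Coprime c p) (hc0 : 0 < c)
    (hexp : ∀ y : ∀ j, D j, (c * p ^ d : ℕ) • y ∈ (algebraMap O (∀ j, D j)).range)
    (g : ℕ) (P : Fin g → Ideal (∀ j, D j)) (e : Fin g → ℕ)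
    (hP : ∀ i, (P i).IsMaximal) (hPne : ∀ i j : Fin g, i ≠ j → P i ≠ P j)
    (he : ∀ i, 0 < e i)
    (hfact : Ideal.span {((p : ℕ) : ∀ j, D j)} = ∏ i, P i ^ (e i))
    (n : ℕ) (hn : d ≤ n) :
    Ideal.span {(c : O) ^ (d * g) * (p : O) ^ (n + d * g)} ≤
        (∏ i : Fin g, (P i ^ (e i * n)).comap (algebraMap O (∀ j, D j))) ∧
    (∏ i : Fin g, (P i ^ (e i * n)).comap (algebraMap O (∀ j, D j))) ≤
        Ideal.span {(p : O) ^ (n - d)} := by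
  classical
  set f := algebraMap O (∀ j, D j) with hf
  set τ : O := (c : O) * (p : O) ^ d with hτ
  have hfτeq : f τ = ((c : ∀ j, D j)) * ((p : ∀ j, D j)) ^ d := by
    rw [hτ, map_mul, map_pow, map_natCast, map_natCast]
  have hfτ : ∀ y : ∀ j, D j, ∃ z : O, f z = f τ * y := by
    intro y
    obtain ⟨z, hz⟩ := hexp y
    refine ⟨z, ?_⟩
    rw [hz, hfτeq, nsmul_eq_mul]
    push_cast
    ring
  -- key lemma: one conductor factor per coprime splitting
  have key : ∀ I J : Ideal (∀ j, D j), IsCoprime I J → ∀ x : O, f x ∈ I * J →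
      τ * x ∈ I.comap f * J.comap f := by
    intro I J hIJ x hx
    have hsup : I ⊔ J = ⊤ := Ideal.isCoprime_iff_sup_eq.mp hIJ
    have h1 : (1 : ∀ j, D j) ∈ I ⊔ J := by rw [hsup]; trivial
    obtain ⟨a, ha, b, hb, hab⟩ := Submodule.mem_sup.mp h1
    obtain ⟨u, hu⟩ := hfτ a
    obtain ⟨v, hv⟩ := hfτ b
    have hxI : x ∈ I.comap f := Ideal.mem_comap.mpr (Ideal.mul_le_left hx)
    have hxJ : x ∈ J.comap f := Ideal.mem_comap.mpr (Ideal.mul_le_right hx)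
    have huI : u ∈ I.comap f := Ideal.mem_comap.mpr (by rw [hu]; exact I.mul_mem_left _ ha)
    have hvJ : v ∈ J.comap f := Ideal.mem_comap.mpr (by rw [hv]; exact J.mul_mem_left _ hb)
    have hu' : f u = (c : ∀ j, D j) * (p : ∀ j, D j) ^ d * a := by rw [hu, hfτeq]
    have hv' : f v = (c : ∀ j, D j) * (p : ∀ j, D j) ^ d * b := by rw [hv, hfτeq]
    have heq : τ * x = u * x + x * v := by
      apply hinj
      simp only [map_mul, map_add, map_pow, map_natCast]
      rw [hfτeq]
      linear_combination (-(f x)) * hu' + (-(f x)) * hv' +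
        (-((c : ∀ j, D j) * (p : ∀ j, D j) ^ d * f x)) * hab
    rw [heq]
    exact add_mem (Ideal.mul_mem_mul huI hxJ) (Ideal.mul_mem_mul hxI hvJ)
  -- inductive version over a finite set of the primes
  have step : ∀ S : Finset (Fin g), ∀ x : O,
      f x ∈ (∏ i ∈ S, P i ^ (e i * n)) →
      τ ^ S.card * x ∈ ∏ i ∈ S, (P i ^ (e i * n)).comap f := by
    intro S
    induction S using Finset.induction_on with
    | empty => intro x _; simp
    | @insert j S' hj ih =>
      intro x hx
      rw [Finset.prod_insert hj] at hx
      have hcop : IsCoprime (P j ^ (e j * n)) (∏ i ∈ S', P i ^ (e i * n)) := by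
        apply IsCoprime.prod_right
        intro i hi
        have hne : P j ≠ P i := hPne j i (by rintro rfl; exact hj hi)
        exact (Ideal.isCoprime_iff_sup_eq.mpr ((hP j).coprime_of_ne (hP i) hne)).pow
      have hτx := key _ _ hcop x hx
      have main : ∀ w ∈ (P j ^ (e j * n)).comap f * (∏ i ∈ S', P i ^ (e i * n)).comap f,
          τ ^ S'.card * w ∈ (P j ^ (e j * n)).comap f * ∏ i ∈ S', (P i ^ (e i * n)).comap f := by
        intro w hw
        refine Submodule.mul_induction_on hw ?_ ?_
        · intro a ha b hb
          have hb' := ih b (Ideal.mem_comap.mp hb)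
          have hring : τ ^ S'.card * (a * b) = a * (τ ^ S'.card * b) := by ring
          rw [hring]
          exact Ideal.mul_mem_mul ha hb'
        · intro w1 w2 h1 h2
          rw [mul_add]; exact add_mem h1 h2
      rw [Finset.card_insert_of_notMem hj, Finset.prod_insert hj]
      have hring : τ ^ (S'.card + 1) * x = τ ^ S'.card * (τ * x) := by ring
      rw [hring]
      exact main _ hτx
  have hprod : (∏ i : Fin g, P i ^ (e i * n)) = Ideal.span {((p : ℕ) : ∀ j, D j) ^ n} := by
    have hpm : ∀ i : Fin g, P i ^ (e i * n) = (P i ^ (e i)) ^ n := fun i => by rw [← pow_mul]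
    rw [Finset.prod_congr rfl (fun i _ => hpm i), Finset.prod_pow, ← hfact,
      Ideal.span_singleton_pow]
  have hfpn : f ((p : O) ^ n) ∈ ∏ i : Fin g, P i ^ (e i * n) := by
    rw [hprod, map_pow, map_natCast]
    exact Ideal.mem_span_singleton_self _
  set I : Ideal O := ∏ i : Fin g, (P i ^ (e i * n)).comap f with hI
  have h1 : τ ^ g * (p : O) ^ n ∈ I := by
    have := step Finset.univ _ hfpn
    simpa using this
  have hpg : ((p : O) ^ n) ^ g ∈ I := by
    rw [hI]
    have hconst : (∏ _i : Fin g, (p : O) ^ n) = ((p : O) ^ n) ^ g := by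
      rw [Finset.prod_const, Finset.card_univ, Fintype.card_fin]
    rw [← hconst]
    apply Ideal.prod_mem_prod
    intro i _
    rw [Ideal.mem_comap, map_pow, map_natCast]
    have hle : (∏ k : Fin g, P k ^ (e k * n)) ≤ P i ^ (e i * n) :=
      Ideal.prod_le_inf.trans (Finset.inf_le (Finset.mem_univ i))
    exact hle (hprod ▸ Ideal.mem_span_singleton_self _)
  -- c is invertible mod I
  obtain ⟨a, b, hab⟩ : IsCoprime (c : ℤ) (((p ^ (n * g) : ℕ)) : ℤ) :=
    Nat.isCoprime_iff_coprime.mpr (hc.pow_right _)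
  have habO : (a : O) * (c : O) + (b : O) * (p : O) ^ (n * g) = 1 := by
    apply_fun (Int.cast : ℤ → O) at hab
    push_cast at hab
    exact hab
  have strip : ∀ y : O, (c : O) * y ∈ I → y ∈ I := by
    intro y hy
    have h2 : (p : O) ^ (n * g) * y ∈ I := by
      have hpw : (p : O) ^ (n * g) = ((p : O) ^ n) ^ g := by rw [← pow_mul]
      rw [hpw]
      exact I.mul_mem_right y hpg
    have hy' : y = (a : O) * ((c : O) * y) + (b : O) * ((p : O) ^ (n * g) * y) := by
      linear_combination (-y) * habO
    rw [hy']
    exact add_mem (I.mul_mem_left _ hy) (I.mul_mem_left _ h2)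
  have strip' : ∀ k : ℕ, ∀ y : O, (c : O) ^ k * y ∈ I → y ∈ I := by
    intro k
    induction k with
    | zero => intro y hy; simpa using hy
    | succ k ih =>
      intro y hy
      apply ih
      apply strip
      have hring : (c : O) * ((c : O) ^ k * y) = (c : O) ^ (k + 1) * y := by ring
      rw [hring]; exact hy
  -- comap is submultiplicative
  have hcomap : I ≤ (∏ i : Fin g, P i ^ (e i * n)).comap f := by
    have haux : ∀ S : Finset (Fin g),
        (∏ i ∈ S, (P i ^ (e i * n)).comap f) ≤ (∏ i ∈ S, P i ^ (e i * n)).comap f := by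
      intro S
      induction S using Finset.induction_on with
      | empty => simp
      | @insert j S' hj ih =>
        rw [Finset.prod_insert hj, Finset.prod_insert hj]
        calc (P j ^ (e j * n)).comap f * (∏ i ∈ S', (P i ^ (e i * n)).comap f)
            ≤ (P j ^ (e j * n)).comap f * (∏ i ∈ S', P i ^ (e i * n)).comap f :=
              Ideal.mul_mono_right ih
          _ ≤ _ := Ideal.le_comap_mul f
    exact haux Finset.univ
  constructor
  · rw [Ideal.span_le, Set.singleton_subset_iff]
    show (c : O) ^ (d * g) * (p : O) ^ (n + d * g) ∈ I
    apply strip' g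
    have heq : (c : O) ^ g * ((c : O) ^ (d * g) * (p : O) ^ (n + d * g))
        = (c : O) ^ (d * g) * (τ ^ g * (p : O) ^ n) := by
      rw [hτ]; ring
    rw [heq]
    exact I.mul_mem_left _ h1
  · intro x hx
    have hfx : f x ∈ Ideal.span {((p : ℕ) : ∀ j, D j) ^ n} := by
      have := hcomap hx
      rw [Ideal.mem_comap, hprod] at this
      exact this
    obtain ⟨y, hy⟩ := Ideal.mem_span_singleton.mp hfx
    obtain ⟨z, hz⟩ := hfτ y
    have hz' : f z = (c : ∀ j, D j) * (p : ∀ j, D j) ^ d * y := by rw [hz, hfτeq]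
    have hpsplit : ((p : ∀ j, D j)) ^ n
        = ((p : ∀ j, D j)) ^ (n - d) * ((p : ∀ j, D j)) ^ d := by
      rw [← pow_add, Nat.sub_add_cancel hn]
    have hcx : (c : O) * x = (p : O) ^ (n - d) * z := by
      apply hinj
      simp only [map_mul, map_pow, map_natCast]
      rw [hy, hz', hpsplit]
      ring
    obtain ⟨a2, b2, hab2⟩ : IsCoprime (c : ℤ) (((p ^ (n - d) : ℕ)) : ℤ) :=
      Nat.isCoprime_iff_coprime.mpr (hc.pow_right _)
    have hab2O : (a2 : O) * (c : O) + (b2 : O) * (p : O) ^ (n - d) = 1 := by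
      apply_fun (Int.cast : ℤ → O) at hab2
      push_cast at hab2
      exact hab2
    rw [Ideal.mem_span_singleton]
    exact ⟨(a2 : O) * z + (b2 : O) * x, by linear_combination (a2 : O) * hcx + (-x) * hab2O⟩
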